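/- Let N ≥ 1, let π₀ lie in the interior of the probability simplex in ℝ^N, let τ > 0, and let c ∈ ℝ^N with c_i ≥ 0 for all i and ‖c‖₂ ≤ R for some R ≥ 0. Define f : ℝ^N × ℝ^N → ℝ by f(y, z) = ⟨softmax(log π₀ + (z+y)/τ), c − y⟩. Then f is jointly Lipschitz with constant R/τ + 1 on the region D = {(y, z) : 0 ≤ y_i ≤ c_i for all i}: for all (y,z), (y',z') ∈ D, |f(y,z) − f(y',z')| ≤ (R/τ + 1)·√(‖y−y'‖₂² + ‖z−z'‖₂²). -/

import Mathlib

open Finset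

/-- `softmax(u)_i = exp(u_i) / Σ_j exp(u_j)`. -/
noncomputable def softmax {N : ℕ} (u : Fin N → ℝ) : Fin N → ℝ :=
  fun i => Real.exp (u i) / ∑ j, Real.exp (u j)

/-- A principal's utility `f(y,z) = ⟨softmax(log π₀ + (z+y)/τ), c − y⟩`. -/
noncomputable def util {N : ℕ} (τ : ℝ) (π₀ c : Fin N → ℝ) (y z : Fin N → ℝ) : ℝ :=
  ∑ i, softmax (fun i => Real.log (π₀ i) + (z i + y i) / τ) i * (c i - y i)

lemma scalar_id {N : ℕ} (P w hL hR : Fin N → ℝ) (τ : ℝ) :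
    (∑ k, (P k * (w k - ∑ j, P j * w j) / τ - P k) * hL k) +
      ∑ k, P k * (w k - ∑ j, P j * w j) / τ * hR k =
    ∑ x, (-(P x * hL x) +
      w x * (P x * (τ⁻¹ * (hR x + hL x)) - P x * ∑ j, P j * (τ⁻¹ * (hR j + hL j)))) := by
  have hSval : (∑ j, P j * (τ⁻¹ * (hR j + hL j)))
      = (∑ j, P j * hR j) * τ⁻¹ + (∑ j, P j * hL j) * τ⁻¹ := by
    calc (∑ j, P j * (τ⁻¹ * (hR j + hL j)))
        = ∑ j, (P j * hR j * τ⁻¹ + P j * hL j * τ⁻¹) :=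
          Finset.sum_congr rfl fun j _ => by ring
      _ = (∑ j, P j * hR j * τ⁻¹) + ∑ j, P j * hL j * τ⁻¹ := Finset.sum_add_distrib
      _ = _ := by simp only [Finset.sum_mul]
  have e1 : (∑ k, (P k * (w k - ∑ j, P j * w j) / τ - P k) * hL k)
      = (∑ k, P k * w k * hL k) * τ⁻¹
        - (∑ k, P k * hL k) * ((∑ j, P j * w j) * τ⁻¹) - (∑ k, P k * hL k) := by
    calc (∑ k, (P k * (w k - ∑ j, P j * w j) / τ - P k) * hL k)
        = ∑ k, (P k * w k * hL k * τ⁻¹ - P k * hL k * ((∑ j, P j * w j) * τ⁻¹) - P k * hL k) :=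
          Finset.sum_congr rfl fun k _ => by ring
      _ = (∑ k, (P k * w k * hL k * τ⁻¹ - P k * hL k * ((∑ j, P j * w j) * τ⁻¹))) - ∑ k, P k * hL k :=
          Finset.sum_sub_distrib _ _
      _ = ((∑ k, P k * w k * hL k * τ⁻¹) - ∑ k, P k * hL k * ((∑ j, P j * w j) * τ⁻¹)) - ∑ k, P k * hL k := by
          rw [Finset.sum_sub_distrib]
      _ = _ := by simp only [Finset.sum_mul]
  have e2 : (∑ k, P k * (w k - ∑ j, P j * w j) / τ * hR k)
      = (∑ k, P k * w k * hR k) * τ⁻¹ - (∑ k, P k * hR k) * ((∑ j, P j * w j) * τ⁻¹) := by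
    calc (∑ k, P k * (w k - ∑ j, P j * w j) / τ * hR k)
        = ∑ k, (P k * w k * hR k * τ⁻¹ - P k * hR k * ((∑ j, P j * w j) * τ⁻¹)) :=
          Finset.sum_congr rfl fun k _ => by ring
      _ = (∑ k, P k * w k * hR k * τ⁻¹) - ∑ k, P k * hR k * ((∑ j, P j * w j) * τ⁻¹) :=
          Finset.sum_sub_distrib _ _
      _ = _ := by simp only [Finset.sum_mul]
  have e3 : (∑ x, (-(P x * hL x) +
        w x * (P x * (τ⁻¹ * (hR x + hL x)) - P x * ∑ j, P j * (τ⁻¹ * (hR j + hL j)))))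
      = -(∑ x, P x * hL x) + ((∑ x, P x * w x * hR x) * τ⁻¹ + (∑ x, P x * w x * hL x) * τ⁻¹
          - (∑ x, P x * w x) * (∑ j, P j * (τ⁻¹ * (hR j + hL j)))) := by
    calc (∑ x, (-(P x * hL x) +
          w x * (P x * (τ⁻¹ * (hR x + hL x)) - P x * ∑ j, P j * (τ⁻¹ * (hR j + hL j)))))
        = ∑ x, (-(P x * hL x) + (P x * w x * hR x * τ⁻¹ + P x * w x * hL x * τ⁻¹
            - P x * w x * ∑ j, P j * (τ⁻¹ * (hR j + hL j)))) :=
          Finset.sum_congr rfl fun x _ => by ring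
      _ = (∑ x, -(P x * hL x)) + ∑ x, (P x * w x * hR x * τ⁻¹ + P x * w x * hL x * τ⁻¹
            - P x * w x * ∑ j, P j * (τ⁻¹ * (hR j + hL j))) := Finset.sum_add_distrib
      _ = (∑ x, -(P x * hL x)) + ((∑ x, (P x * w x * hR x * τ⁻¹ + P x * w x * hL x * τ⁻¹))
            - ∑ x, P x * w x * ∑ j, P j * (τ⁻¹ * (hR j + hL j))) := by rw [Finset.sum_sub_distrib]
      _ = (∑ x, -(P x * hL x)) + (((∑ x, P x * w x * hR x * τ⁻¹) + ∑ x, P x * w x * hL x * τ⁻¹)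
            - ∑ x, P x * w x * ∑ j, P j * (τ⁻¹ * (hR j + hL j))) := by rw [Finset.sum_add_distrib]
      _ = _ := by rw [Finset.sum_neg_distrib]; simp only [Finset.sum_mul]
  rw [e1, e2, e3, hSval]
  ring

namespace Stmt12Aux
variable {N : ℕ}
noncomputable def uu (π₀ : Fin N → ℝ) (τ : ℝ) (v : EuclideanSpace ℝ (Fin N ⊕ Fin N)) (i : Fin N) : ℝ :=
  Real.log (π₀ i) + (v (Sum.inr i) + v (Sum.inl i)) / τ
noncomputable def pp (π₀ : Fin N → ℝ) (τ : ℝ) (v : EuclideanSpace ℝ (Fin N ⊕ Fin N)) : Fin N → ℝ :=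
  softmax (uu π₀ τ v)
noncomputable def FF (π₀ : Fin N → ℝ) (τ : ℝ) (c : Fin N → ℝ)
    (v : EuclideanSpace ℝ (Fin N ⊕ Fin N)) : ℝ :=
  ∑ i, pp π₀ τ v i * (c i - v (Sum.inl i))
noncomputable def gg (π₀ : Fin N → ℝ) (τ : ℝ) (c : Fin N → ℝ)
    (v : EuclideanSpace ℝ (Fin N ⊕ Fin N)) (k : Fin N) : ℝ :=
  pp π₀ τ v k * ((c k - v (Sum.inl k)) - ∑ j, pp π₀ τ v j * (c j - v (Sum.inl j))) / τ
noncomputable def GG (π₀ : Fin N → ℝ) (τ : ℝ) (c : Fin N → ℝ)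
    (v : EuclideanSpace ℝ (Fin N ⊕ Fin N)) : EuclideanSpace ℝ (Fin N ⊕ Fin N) :=
  (WithLp.equiv 2 ((Fin N ⊕ Fin N) → ℝ)).symm
    (Sum.elim (fun k => gg π₀ τ c v k - pp π₀ τ v k) (gg π₀ τ c v))
variable (π₀ : Fin N → ℝ) (τ : ℝ) (c : Fin N → ℝ) (v : EuclideanSpace ℝ (Fin N ⊕ Fin N))
lemma Zpos (hN : 1 ≤ N) : 0 < ∑ j, Real.exp (uu π₀ τ v j) := by
  have : Nonempty (Fin N) := ⟨⟨0, hN⟩⟩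
  exact Finset.sum_pos (fun j _ => Real.exp_pos _) (by simp [Finset.univ_nonempty])

lemma hasFDerivAt_FF (hN : 1 ≤ N) (hτ : 0 < τ) :
    HasFDerivAt (FF π₀ τ c) ((innerSL ℝ) (GG π₀ τ c v)) v := by
  classical
  set D : Fin N → ((EuclideanSpace ℝ (Fin N ⊕ Fin N)) →L[ℝ] ℝ) :=
    fun i => τ⁻¹ • ((EuclideanSpace.proj (Sum.inr i) : (EuclideanSpace ℝ (Fin N ⊕ Fin N)) →L[ℝ] ℝ) + EuclideanSpace.proj (Sum.inl i)) with hDdef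
  have hu : ∀ i, HasFDerivAt (fun w => uu π₀ τ w i) (D i) v := by
    intro i
    have h1 : HasFDerivAt (fun w : (EuclideanSpace ℝ (Fin N ⊕ Fin N)) => w (Sum.inr i) + w (Sum.inl i))
        ((EuclideanSpace.proj (Sum.inr i) : (EuclideanSpace ℝ (Fin N ⊕ Fin N)) →L[ℝ] ℝ) + EuclideanSpace.proj (Sum.inl i)) v := by
      exact ((EuclideanSpace.proj (Sum.inr i) : (EuclideanSpace ℝ (Fin N ⊕ Fin N)) →L[ℝ] ℝ).hasFDerivAt.add
        (EuclideanSpace.proj (Sum.inl i) : (EuclideanSpace ℝ (Fin N ⊕ Fin N)) →L[ℝ] ℝ).hasFDerivAt)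
    have h2 := (h1.const_mul τ⁻¹).const_add (Real.log (π₀ i))
    have : (fun w : (EuclideanSpace ℝ (Fin N ⊕ Fin N)) => Real.log (π₀ i) + τ⁻¹ * (w (Sum.inr i) + w (Sum.inl i)))
        = fun w => uu π₀ τ w i := by
      funext w; rw [uu, div_eq_inv_mul]
    rwa [this] at h2
  set Z : (EuclideanSpace ℝ (Fin N ⊕ Fin N)) → ℝ := fun w => ∑ j, Real.exp (uu π₀ τ w j) with hZdef
  set Z' : (EuclideanSpace ℝ (Fin N ⊕ Fin N)) →L[ℝ] ℝ := ∑ j, Real.exp (uu π₀ τ v j) • D j with hZ'def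
  have hZ : HasFDerivAt Z Z' v := HasFDerivAt.fun_sum (fun j _ => (hu j).exp)
  have hZpos : 0 < Z v := Zpos π₀ τ v hN
  have hinv : HasFDerivAt (fun w => (Z w)⁻¹) ((-((Z v) ^ 2)⁻¹) • Z') v := by
    have := (hasDerivAt_inv hZpos.ne').comp_hasFDerivAt v hZ
    exact this
  have hbig : HasFDerivAt (fun w => ∑ i, Real.exp (uu π₀ τ w i) * (Z w)⁻¹ * (c i - w (Sum.inl i)))
      (∑ i, ((Real.exp (uu π₀ τ v i) * (Z v)⁻¹) • (-(EuclideanSpace.proj (Sum.inl i) : (EuclideanSpace ℝ (Fin N ⊕ Fin N)) →L[ℝ] ℝ)) +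
        (c i - v (Sum.inl i)) •
          (Real.exp (uu π₀ τ v i) • ((-((Z v) ^ 2)⁻¹) • Z') + (Z v)⁻¹ • (Real.exp (uu π₀ τ v i) • D i)))) v := by
    apply HasFDerivAt.fun_sum
    intro i _
    have hwa : HasFDerivAt (fun w : (EuclideanSpace ℝ (Fin N ⊕ Fin N)) => c i - w (Sum.inl i))
        (-(EuclideanSpace.proj (Sum.inl i) : (EuclideanSpace ℝ (Fin N ⊕ Fin N)) →L[ℝ] ℝ)) v := by
      simpa using ((EuclideanSpace.proj (Sum.inl i) : (EuclideanSpace ℝ (Fin N ⊕ Fin N)) →L[ℝ] ℝ).hasFDerivAt.const_sub (c i))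
    exact (((hu i).exp.mul hinv)).mul hwa
  have hFeq : FF π₀ τ c = fun w => ∑ i, Real.exp (uu π₀ τ w i) * (Z w)⁻¹ * (c i - w (Sum.inl i)) := by
    funext w
    refine Finset.sum_congr rfl fun i _ => ?_
    rw [pp, softmax, div_eq_mul_inv]
  rw [hFeq]
  refine hbig.congr_fderiv (Eq.symm ?_)
  apply ContinuousLinearMap.ext
  intro h
  simp only [ContinuousLinearMap.sum_apply, ContinuousLinearMap.add_apply,
    ContinuousLinearMap.smul_apply, ContinuousLinearMap.neg_apply,
    PiLp.proj_apply, smul_eq_mul, innerSL_apply_apply, PiLp.inner_apply,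
    RCLike.inner_apply', starRingEnd_apply, star_trivial, hDdef]
  have hZne : Z v ≠ 0 := hZpos.ne'
  have hZ'h : Z' h = ∑ j, Real.exp (uu π₀ τ v j) * (τ⁻¹ * (h (Sum.inr j) + h (Sum.inl j))) := by
    rw [hZ'def]
    simp [hDdef, ContinuousLinearMap.sum_apply, PiLp.proj_apply]
    exact Finset.sum_congr rfl fun j _ => by ring
  rw [hZ'h, Fintype.sum_sum_type]
  have hGl : ∀ k : Fin N, GG π₀ τ c v (Sum.inl k) = gg π₀ τ c v k - pp π₀ τ v k := fun _ => rfl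
  have hGr : ∀ k : Fin N, GG π₀ τ c v (Sum.inr k) = gg π₀ τ c v k := fun _ => rfl
  simp only [hGl, hGr, gg]
  have he : ∀ j, Real.exp (uu π₀ τ v j) = pp π₀ τ v j * Z v := by
    intro j
    have hppj : pp π₀ τ v j = Real.exp (uu π₀ τ v j) / Z v := rfl
    rw [hppj, div_mul_cancel₀ _ hZne]
  simp only [he]
  have hT : (∑ j, pp π₀ τ v j * Z v * (τ⁻¹ * (h (Sum.inr j) + h (Sum.inl j))))
      = Z v * ∑ j, pp π₀ τ v j * (τ⁻¹ * (h (Sum.inr j) + h (Sum.inl j))) := by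
    rw [Finset.mul_sum]; exact Finset.sum_congr rfl fun j _ => by ring
  rw [hT]
  refine (scalar_id (pp π₀ τ v) (fun k => c k - v (Sum.inl k)) (fun k => h (Sum.inl k))
    (fun k => h (Sum.inr k)) τ).trans ?_
  refine Finset.sum_congr rfl fun x _ => ?_
  field_simp
  ring
lemma pp_nonneg (k : Fin N) : 0 ≤ pp π₀ τ v k := by
  unfold pp softmax; positivity
lemma sum_pp (hN : 1 ≤ N) : ∑ k, pp π₀ τ v k = 1 := by
  unfold pp softmax
  rw [← Finset.sum_div, div_self (Zpos π₀ τ v hN).ne']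
lemma pp_le_one (hN : 1 ≤ N) (k : Fin N) : pp π₀ τ v k ≤ 1 := by
  have h := sum_pp π₀ τ v hN
  have := Finset.single_le_sum (f := pp π₀ τ v) (fun j _ => pp_nonneg π₀ τ v j) (Finset.mem_univ k)
  linarith

lemma norm_GG_le (hN : 1 ≤ N) (hτ : 0 < τ) (R : ℝ) (hR : 0 ≤ R) (hcR : ∀ i, c i ≤ R)
    (hbox : ∀ i, 0 ≤ v (Sum.inl i) ∧ v (Sum.inl i) ≤ c i) :
    ‖GG π₀ τ c v‖ ≤ R / τ + 1 := by
  classical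
  set P : Fin N → ℝ := pp π₀ τ v with hP
  set w : Fin N → ℝ := fun k => c k - v (Sum.inl k) with hw
  set m : ℝ := ∑ j, P j * w j with hm
  have hP0 : ∀ k, 0 ≤ P k := pp_nonneg π₀ τ v
  have hP1 : ∀ k, P k ≤ 1 := pp_le_one π₀ τ v hN
  have hPsum : ∑ k, P k = 1 := sum_pp π₀ τ v hN
  have hw0 : ∀ k, 0 ≤ w k := fun k => by
    have := (hbox k).2; simp only [hw]; linarith
  have hwR : ∀ k, w k ≤ R := fun k => by
    have := (hbox k).1; have := hcR k; simp only [hw]; linarith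
  have hm0 : 0 ≤ m := Finset.sum_nonneg fun j _ => mul_nonneg (hP0 j) (hw0 j)
  have hmR : m ≤ R := by
    calc m ≤ ∑ j, P j * R := Finset.sum_le_sum fun j _ =>
            mul_le_mul_of_nonneg_left (hwR j) (hP0 j)
      _ = R := by rw [← Finset.sum_mul, hPsum, one_mul]
  -- key bound on ∑ (P (w - m))²
  have hA : (∑ k, P k * w k ^ 2) ≤ R * m := by
    calc (∑ k, P k * w k ^ 2) ≤ ∑ k, P k * (R * w k) := Finset.sum_le_sum fun k _ => by
          have hww : w k ^ 2 ≤ R * w k := by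
            nlinarith [mul_nonneg (sub_nonneg.2 (hwR k)) (hw0 k)]
          exact mul_le_mul_of_nonneg_left hww (hP0 k)
      _ = R * m := by
          rw [hm, Finset.mul_sum]; exact Finset.sum_congr rfl fun k _ => by ring
  have hvar : (∑ k, P k * (w k - m) ^ 2) = (∑ k, P k * w k ^ 2) - m ^ 2 := by
    calc (∑ k, P k * (w k - m) ^ 2)
        = ∑ k, (P k * w k ^ 2 - 2 * m * (P k * w k) + m ^ 2 * P k) :=
          Finset.sum_congr rfl fun k _ => by ring
      _ = (∑ k, P k * w k ^ 2) - 2 * m * (∑ k, P k * w k) + m ^ 2 * ∑ k, P k := by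
          rw [Finset.sum_add_distrib, Finset.sum_sub_distrib, ← Finset.mul_sum, ← Finset.mul_sum]
      _ = _ := by rw [hPsum, ← hm]; ring
  have hsq : (∑ k, (P k * (w k - m)) ^ 2) ≤ R ^ 2 / 4 := by
    have h1 : (∑ k, (P k * (w k - m)) ^ 2) ≤ ∑ k, P k * (w k - m) ^ 2 :=
      Finset.sum_le_sum fun k _ => by
        have h := mul_le_mul_of_nonneg_right
          (mul_le_of_le_one_right (hP0 k) (hP1 k)) (sq_nonneg (w k - m))
        calc (P k * (w k - m)) ^ 2 = P k * P k * (w k - m) ^ 2 := by ring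
          _ ≤ P k * (w k - m) ^ 2 := h
    have h2 : (∑ k, P k * w k ^ 2) - m ^ 2 ≤ R ^ 2 / 4 := by nlinarith [sq_nonneg (R - 2 * m)]
    linarith [hvar ▸ h1]
  have hgg : ∀ k, gg π₀ τ c v k = P k * (w k - m) / τ := fun k => rfl
  have hSg : (∑ k, gg π₀ τ c v k ^ 2) ≤ R ^ 2 / (4 * τ ^ 2) := by
    have : ∀ k, gg π₀ τ c v k ^ 2 = (P k * (w k - m)) ^ 2 / τ ^ 2 := fun k => by
      rw [hgg k, div_pow]
    rw [Finset.sum_congr rfl fun k _ => this k, ← Finset.sum_div]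
    rw [div_le_div_iff₀ (by positivity) (by positivity)]
    nlinarith [hsq, sq_nonneg τ, hτ]
  -- split GG
  set G1 : EuclideanSpace ℝ (Fin N ⊕ Fin N) :=
    (WithLp.equiv 2 ((Fin N ⊕ Fin N) → ℝ)).symm (Sum.elim (gg π₀ τ c v) (gg π₀ τ c v)) with hG1
  set G2 : EuclideanSpace ℝ (Fin N ⊕ Fin N) :=
    (WithLp.equiv 2 ((Fin N ⊕ Fin N) → ℝ)).symm (Sum.elim P (fun _ => 0)) with hG2
  have hsplit : GG π₀ τ c v = G1 - G2 := by
    ext x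
    cases x with
    | inl k => simp [GG, hG1, hG2, PiLp.sub_apply, hP]
    | inr k => simp [GG, hG1, hG2, PiLp.sub_apply]
  have hnG1 : ‖G1‖ ≤ R / τ := by
    rw [EuclideanSpace.norm_eq, Fintype.sum_sum_type]
    have hcoord : (∑ k, ‖G1 (Sum.inl k)‖ ^ 2) + (∑ k, ‖G1 (Sum.inr k)‖ ^ 2)
        = (∑ k, gg π₀ τ c v k ^ 2) + ∑ k, gg π₀ τ c v k ^ 2 := by
      simp [hG1, Real.norm_eq_abs, sq_abs]
    rw [hcoord]
    have : (∑ k, gg π₀ τ c v k ^ 2) + (∑ k, gg π₀ τ c v k ^ 2) ≤ (R / τ) ^ 2 := by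
      have h2 : R ^ 2 / (4 * τ ^ 2) + R ^ 2 / (4 * τ ^ 2) ≤ (R / τ) ^ 2 := by
        rw [div_pow]
        rw [← add_div, div_le_div_iff₀ (by positivity) (by positivity)]
        nlinarith [sq_nonneg R, sq_nonneg τ]
      linarith [hSg]
    calc Real.sqrt ((∑ k, gg π₀ τ c v k ^ 2) + ∑ k, gg π₀ τ c v k ^ 2)
        ≤ Real.sqrt ((R / τ) ^ 2) := Real.sqrt_le_sqrt this
      _ = R / τ := Real.sqrt_sq (by positivity)
  have hnG2 : ‖G2‖ ≤ 1 := by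
    rw [EuclideanSpace.norm_eq, Fintype.sum_sum_type]
    have hcoord : (∑ k, ‖G2 (Sum.inl k)‖ ^ 2) + (∑ k, ‖G2 (Sum.inr k)‖ ^ 2)
        = ∑ k, P k ^ 2 := by
      simp [hG2, Real.norm_eq_abs, sq_abs]
    rw [hcoord]
    have hle : (∑ k, P k ^ 2) ≤ 1 := by
      calc (∑ k, P k ^ 2) ≤ ∑ k, P k := Finset.sum_le_sum fun k _ => by
            nlinarith [hP0 k, hP1 k]
        _ = 1 := hPsum
    calc Real.sqrt (∑ k, P k ^ 2) ≤ Real.sqrt 1 := Real.sqrt_le_sqrt hle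
      _ = 1 := Real.sqrt_one
  calc ‖GG π₀ τ c v‖ = ‖G1 - G2‖ := by rw [hsplit]
    _ ≤ ‖G1‖ + ‖G2‖ := norm_sub_le _ _
    _ ≤ R / τ + 1 := add_le_add hnG1 hnG2

lemma lip_on_box (hN : 1 ≤ N) (hτ : 0 < τ) (R : ℝ) (hR : 0 ≤ R) (hcR : ∀ i, c i ≤ R)
    (v v' : EuclideanSpace ℝ (Fin N ⊕ Fin N))
    (hv : ∀ i, 0 ≤ v (Sum.inl i) ∧ v (Sum.inl i) ≤ c i)
    (hv' : ∀ i, 0 ≤ v' (Sum.inl i) ∧ v' (Sum.inl i) ≤ c i) :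
    ‖FF π₀ τ c v - FF π₀ τ c v'‖ ≤ (R / τ + 1) * ‖v - v'‖ := by
  set s : Set (EuclideanSpace ℝ (Fin N ⊕ Fin N)) :=
    {x | ∀ i, 0 ≤ x (Sum.inl i) ∧ x (Sum.inl i) ≤ c i} with hs
  have hconv : Convex ℝ s := by
    intro a ha b hb sa sb hsa hsb hsum
    intro i
    have h1 := ha i
    have h2 := hb i
    have hcoord : (sa • a + sb • b) (Sum.inl i) = sa * a (Sum.inl i) + sb * b (Sum.inl i) := rfl
    constructor
    · rw [hcoord]
      nlinarith [mul_nonneg hsa h1.1, mul_nonneg hsb h2.1]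
    · rw [hcoord]
      have h3 : sa * c i + sb * c i = c i := by rw [← add_mul, hsum, one_mul]
      nlinarith [mul_le_mul_of_nonneg_left h1.2 hsa, mul_le_mul_of_nonneg_left h2.2 hsb]
  exact Convex.norm_image_sub_le_of_norm_hasFDerivWithin_le
    (fun x _ => (hasFDerivAt_FF π₀ τ c x hN hτ).hasFDerivWithinAt)
    (fun x hx => by
      rw [innerSL_apply_norm]
      exact norm_GG_le π₀ τ c x hN hτ R hR hcR hx)
    hconv hv' hv

end Stmt12Aux

/-- The principal's utility is jointly `(R/τ + 1)`-Lipschitz on the feasible box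
`{(y,z) : 0 ≤ y ≤ c}` (Euclidean norms). -/
theorem stmt_12 (N : ℕ) (hN : 1 ≤ N) (π₀ : Fin N → ℝ)
    (hπ₀pos : ∀ i, 0 < π₀ i) (hπ₀sum : ∑ i, π₀ i = 1)
    (τ : ℝ) (hτ : 0 < τ) (c : Fin N → ℝ) (hc0 : ∀ i, 0 ≤ c i)
    (R : ℝ) (hR : 0 ≤ R) (hcR : Real.sqrt (∑ i, (c i) ^ 2) ≤ R) :
    ∀ y z y' z' : Fin N → ℝ,
      (∀ i, 0 ≤ y i ∧ y i ≤ c i) → (∀ i, 0 ≤ y' i ∧ y' i ≤ c i) →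
      |util τ π₀ c y z - util τ π₀ c y' z'| ≤
        (R / τ + 1) *
          Real.sqrt ((∑ i, (y i - y' i) ^ 2) + (∑ i, (z i - z' i) ^ 2)) := by
  intro y z y' z' hy hy'
  set v : EuclideanSpace ℝ (Fin N ⊕ Fin N) :=
    (WithLp.equiv 2 ((Fin N ⊕ Fin N) → ℝ)).symm (Sum.elim y z) with hv
  set v' : EuclideanSpace ℝ (Fin N ⊕ Fin N) :=
    (WithLp.equiv 2 ((Fin N ⊕ Fin N) → ℝ)).symm (Sum.elim y' z') with hv'
  have hcR' : ∀ i, c i ≤ R := by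
    intro i
    calc c i = Real.sqrt ((c i) ^ 2) := (Real.sqrt_sq (hc0 i)).symm
      _ ≤ Real.sqrt (∑ j, (c j) ^ 2) :=
          Real.sqrt_le_sqrt (Finset.single_le_sum (fun j _ => sq_nonneg (c j)) (Finset.mem_univ i))
      _ ≤ R := hcR
  have hvmem : ∀ i, 0 ≤ v (Sum.inl i) ∧ v (Sum.inl i) ≤ c i := fun i => hy i
  have hv'mem : ∀ i, 0 ≤ v' (Sum.inl i) ∧ v' (Sum.inl i) ≤ c i := fun i => hy' i
  have hFv : util τ π₀ c y z = Stmt12Aux.FF π₀ τ c v := rfl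
  have hFv' : util τ π₀ c y' z' = Stmt12Aux.FF π₀ τ c v' := rfl
  have hnorm : ‖v - v'‖ =
      Real.sqrt ((∑ i, (y i - y' i) ^ 2) + (∑ i, (z i - z' i) ^ 2)) := by
    rw [EuclideanSpace.norm_eq, Fintype.sum_sum_type]
    have h1 : ∀ i : Fin N, ‖(v - v') (Sum.inl i)‖ ^ 2 = (y i - y' i) ^ 2 := fun i => by
      simp [hv, hv', PiLp.sub_apply, Real.norm_eq_abs, sq_abs]
    have h2 : ∀ i : Fin N, ‖(v - v') (Sum.inr i)‖ ^ 2 = (z i - z' i) ^ 2 := fun i => by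
      simp [hv, hv', PiLp.sub_apply, Real.norm_eq_abs, sq_abs]
    rw [Finset.sum_congr rfl fun i _ => h1 i, Finset.sum_congr rfl fun i _ => h2 i]
  have hlip := Stmt12Aux.lip_on_box π₀ τ c hN hτ R hR hcR' v v' hvmem hv'mem
  rw [hFv, hFv', ← hnorm, ← Real.norm_eq_abs]
  exact hlip
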